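/- If the matrix Q := ∫ t in (0:ℝ)..r, q t * (q t)ᵀ is positive definite, then the state at time r is recovered exactly from the output history and the input data by the observer operator P: x r = Φ r *ᵥ (Q⁻¹ *ᵥ ∫ t in (0:ℝ)..r, q t *ᵥ p t) + θ r. (Dead-beat reconstruction formula (2.23)–(2.24), the core of Corollaries 2.9 and 2.11: the hybrid observer output equals the true state after time r.) -/

import Mathlib

open MeasureTheory intervalIntegral Matrix

attribute [local instance] Matrix.normedAddCommGroup Matrix.normedSpace

lemma aux_norm_mulVec_le {n k : ℕ} (M : Matrix (Fin n) (Fin k) ℝ) (v : Fin k → ℝ) :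
    ‖M *ᵥ v‖ ≤ (k : ℝ) * ‖M‖ * ‖v‖ := by
  have hnn : (0:ℝ) ≤ (k : ℝ) * ‖M‖ * ‖v‖ := by positivity
  rw [pi_norm_le_iff_of_nonneg hnn]
  intro i
  calc ‖(M *ᵥ v) i‖ = ‖∑ j, M i j * v j‖ := by simp [Matrix.mulVec, dotProduct]
    _ ≤ ∑ j, ‖M i j * v j‖ := norm_sum_le _ _
    _ ≤ ∑ _j : Fin k, ‖M‖ * ‖v‖ := by
        refine Finset.sum_le_sum fun j _ => ?_
        rw [norm_mul]
        exact mul_le_mul (Matrix.norm_entry_le_entrywise_sup_norm M)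
          (norm_le_pi_norm v j) (norm_nonneg _) (norm_nonneg _)
    _ = (k:ℝ) * ‖M‖ * ‖v‖ := by simp [mul_assoc]

noncomputable def mulVecCLM {n k : ℕ} (v : Fin k → ℝ) :
    Matrix (Fin n) (Fin k) ℝ →L[ℝ] (Fin n → ℝ) :=
  LinearMap.toContinuousLinearMap
    { toFun := fun M => M *ᵥ v
      map_add' := fun M N => Matrix.add_mulVec M N v
      map_smul' := fun c M => Matrix.smul_mulVec c M v }

@[simp] lemma mulVecCLM_apply {n k : ℕ} (v : Fin k → ℝ) (M : Matrix (Fin n) (Fin k) ℝ) :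
    mulVecCLM v M = M *ᵥ v := rfl

noncomputable def mulVecTransCLM {n k : ℕ} (v : Fin n → ℝ) :
    Matrix (Fin n) (Fin k) ℝ →L[ℝ] (Fin k → ℝ) :=
  LinearMap.toContinuousLinearMap
    { toFun := fun M => Mᵀ *ᵥ v
      map_add' := fun M N => by simp [Matrix.transpose_add, Matrix.add_mulVec]
      map_smul' := fun c M => by simp [Matrix.transpose_smul, Matrix.smul_mulVec] }

@[simp] lemma mulVecTransCLM_apply {n k : ℕ} (v : Fin n → ℝ) (M : Matrix (Fin n) (Fin k) ℝ) :
    mulVecTransCLM v M = Mᵀ *ᵥ v := rfl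

lemma ContinuousOn.matrix_mulVec' {X : Type*} [TopologicalSpace X] {s : Set X} {m k : ℕ}
    {M : X → Matrix (Fin m) (Fin k) ℝ} {v : X → Fin k → ℝ}
    (hM : ContinuousOn M s) (hv : ContinuousOn v s) :
    ContinuousOn (fun t => M t *ᵥ v t) s := by
  rw [continuousOn_iff_continuous_restrict] at *
  exact hM.matrix_mulVec hv

lemma ContinuousOn.matrix_transpose' {X : Type*} [TopologicalSpace X] {s : Set X} {m k : ℕ}
    {M : X → Matrix (Fin m) (Fin k) ℝ} (hM : ContinuousOn M s) :
    ContinuousOn (fun t => (M t)ᵀ) s := by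
  rw [continuousOn_iff_continuous_restrict] at *
  exact hM.matrix_transpose

lemma ContinuousOn.matrix_mul' {X : Type*} [TopologicalSpace X] {s : Set X} {m k l : ℕ}
    {M : X → Matrix (Fin m) (Fin k) ℝ} {N : X → Matrix (Fin k) (Fin l) ℝ}
    (hM : ContinuousOn M s) (hN : ContinuousOn N s) :
    ContinuousOn (fun t => M t * N t) s := by
  rw [continuousOn_iff_continuous_restrict] at *
  exact hM.matrix_mul hN

/-- Dead-beat reconstruction formula (2.23)–(2.24), the core of Corollaries
2.9 and 2.11: if `Q = ∫ t in 0..r, q t * (q t)ᵀ` is positive definite, then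
the state at time `r` is recovered exactly from the output history and the
input data by the observer operator `P`:
`x r = Φ r *ᵥ (Q⁻¹ *ᵥ ∫ t in 0..r, q t *ᵥ p t) + θ r`. -/
theorem stmt_19 (n k : ℕ) (hn : 1 ≤ n) (hk : 1 ≤ k) (r : ℝ) (hr : 0 < r)
    (A : ℝ → Matrix (Fin n) (Fin n) ℝ) (b : ℝ → (Fin n → ℝ))
    (C : ℝ → Matrix (Fin n) (Fin k) ℝ) (f : ℝ → (Fin k → ℝ))
    (hA : ContinuousOn A (Set.Icc 0 r)) (hb : ContinuousOn b (Set.Icc 0 r))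
    (hC : ContinuousOn C (Set.Icc 0 r)) (hf : ContinuousOn f (Set.Icc 0 r))
    (x : ℝ → (Fin n → ℝ)) (y : ℝ → (Fin k → ℝ)) (x₀ : Fin n → ℝ)
    (hx : ∀ t ∈ Set.Icc (0:ℝ) r,
      HasDerivWithinAt x (A t *ᵥ x t + b t) (Set.Icc 0 r) t)
    (hy : ∀ t ∈ Set.Icc (0:ℝ) r,
      HasDerivWithinAt y (f t + (C t)ᵀ *ᵥ x t) (Set.Icc 0 r) t)
    (hx0 : x 0 = x₀)
    (Φ : ℝ → Matrix (Fin n) (Fin n) ℝ)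
    (hΦ : ∀ t ∈ Set.Icc (0:ℝ) r, HasDerivWithinAt Φ (A t * Φ t) (Set.Icc 0 r) t)
    (hΦ0 : Φ 0 = 1)
    (θ : ℝ → (Fin n → ℝ))
    (hθ : ∀ t ∈ Set.Icc (0:ℝ) r,
      HasDerivWithinAt θ (A t *ᵥ θ t + b t) (Set.Icc 0 r) t)
    (hθ0 : θ 0 = 0)
    (q : ℝ → Matrix (Fin n) (Fin k) ℝ)
    (hqdef : ∀ t, q t = ∫ s in (0:ℝ)..t, (Φ s)ᵀ * C s)
    (p : ℝ → (Fin k → ℝ))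
    (hpdef : ∀ t, p t = y t - y 0 - (∫ s in (0:ℝ)..t, f s)
      - ∫ s in (0:ℝ)..t, (C s)ᵀ *ᵥ θ s)
    (Q : Matrix (Fin n) (Fin n) ℝ) (hQ : Q = ∫ t in (0:ℝ)..r, q t * (q t)ᵀ)
    (hQpd : Q.PosDef) :
    x r = Φ r *ᵥ (Q⁻¹ *ᵥ ∫ t in (0:ℝ)..r, q t *ᵥ p t) + θ r := by
  have h0r : (0:ℝ) ≤ r := hr.le
  have hrmem : r ∈ Set.Icc (0:ℝ) r := ⟨h0r, le_rfl⟩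
  -- continuity of the solutions
  have hxc : ContinuousOn x (Set.Icc 0 r) := fun t ht => (hx t ht).continuousWithinAt
  have hθc : ContinuousOn θ (Set.Icc 0 r) := fun t ht => (hθ t ht).continuousWithinAt
  have hΦc : ContinuousOn Φ (Set.Icc 0 r) := fun t ht => (hΦ t ht).continuousWithinAt
  have hyc : ContinuousOn y (Set.Icc 0 r) := fun t ht => (hy t ht).continuousWithinAt
  -- Step A : x t = Φ t *ᵥ x₀ + θ t on [0, r]
  have huniq : ∀ t ∈ Set.Icc (0:ℝ) r, x t = Φ t *ᵥ x₀ + θ t := by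
    obtain ⟨c, hc⟩ := isCompact_Icc.exists_bound_of_continuousOn hA
    have hc0 : 0 ≤ c := le_trans (norm_nonneg _) (hc 0 ⟨le_rfl, h0r⟩)
    set π : ℝ → ℝ := fun t => min (max t 0) r with hπ
    have hπmem : ∀ t, π t ∈ Set.Icc (0:ℝ) r :=
      fun t => ⟨le_min (le_max_right _ _) h0r, min_le_right _ _⟩
    have hπeq : ∀ t ∈ Set.Ico (0:ℝ) r, π t = t := fun t ht => by
      simp [hπ, max_eq_left ht.1, min_eq_left ht.2.le]
    set K : NNReal := Real.toNNReal ((n : ℝ) * c) with hK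
    have hKc : (K : ℝ) = (n : ℝ) * c := Real.coe_toNNReal _ (by positivity)
    have hlip : ∀ t, LipschitzWith K (fun z : Fin n → ℝ => A (π t) *ᵥ z) := by
      intro t
      refine LipschitzWith.of_dist_le_mul fun z w => ?_
      rw [dist_eq_norm, ← Matrix.mulVec_sub, dist_eq_norm]
      calc ‖A (π t) *ᵥ (z - w)‖ ≤ (n:ℝ) * ‖A (π t)‖ * ‖z - w‖ := aux_norm_mulVec_le _ _
        _ ≤ (n:ℝ) * c * ‖z - w‖ := by
            have := hc _ (hπmem t); gcongr
        _ = (K : ℝ) * ‖z - w‖ := by rw [hKc]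
    have hmemIci : ∀ t ∈ Set.Ico (0:ℝ) r, Set.Icc (0:ℝ) r ∈ nhdsWithin t (Set.Ici t) :=
      fun t ht => Icc_mem_nhdsGE_of_mem ht
    have key : Set.EqOn (fun t => x t - θ t) (fun t => mulVecCLM (n := n) x₀ (Φ t))
        (Set.Icc 0 r) := by
      refine ODE_solution_unique_of_mem_Icc_right (v := fun t z => A (π t) *ᵥ z)
        (s := fun _ => Set.univ) (fun t _ => lipschitzOnWith_univ.mpr (hlip t))
        (hxc.sub hθc) ?_ (fun t _ => trivial)
        ((mulVecCLM x₀).continuous.comp_continuousOn hΦc) ?_ (fun t _ => trivial) ?_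
      · intro t ht
        have h1 := ((hx t ⟨ht.1, ht.2.le⟩).sub (hθ t ⟨ht.1, ht.2.le⟩)).mono_of_mem_nhdsWithin
          (hmemIci t ht)
        have : A t *ᵥ x t + b t - (A t *ᵥ θ t + b t) = A (π t) *ᵥ (x t - θ t) := by
          rw [hπeq t ht, Matrix.mulVec_sub]; abel
        rwa [this] at h1
      · intro t ht
        have h1 := ((mulVecCLM x₀).hasFDerivAt.comp_hasDerivWithinAt t
          (hΦ t ⟨ht.1, ht.2.le⟩)).mono_of_mem_nhdsWithin (hmemIci t ht)
        have : mulVecCLM (n := n) x₀ (A t * Φ t) = A (π t) *ᵥ (mulVecCLM x₀ (Φ t)) := by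
          rw [hπeq t ht]; simp [Matrix.mulVec_mulVec]
        convert h1 using 1
        · rfl
        · exact this.symm
      · simp [hx0, hθ0, hΦ0, Matrix.one_mulVec]
    intro t ht
    have := key ht
    simp only [mulVecCLM_apply] at this
    have h2 : x t - θ t = Φ t *ᵥ x₀ := this
    rw [← h2]; abel
  -- continuity of q
  have hΦC : ContinuousOn (fun s => (Φ s)ᵀ * C s) (Set.Icc 0 r) :=
    hΦc.matrix_transpose'.matrix_mul' hC
  have hΦCint := fun t (ht : t ∈ Set.Icc (0:ℝ) r) =>
    (hΦC.mono (Set.Icc_subset_Icc le_rfl ht.2)).intervalIntegrable_of_Icc (μ := volume) ht.1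
  have hqc : ContinuousOn q (Set.Icc 0 r) := by
    have : ContinuousOn (fun t => ∫ s in (0:ℝ)..t, (Φ s)ᵀ * C s) (Set.Icc 0 r) := by
      have := intervalIntegral.continuousOn_primitive_interval
        (f := fun s => (Φ s)ᵀ * C s) (a := (0:ℝ)) (b := r) (μ := volume) ?_
      · rwa [Set.uIcc_of_le h0r] at this
      · rw [Set.uIcc_of_le h0r]
        exact hΦC.integrableOn_compact isCompact_Icc
    exact this.congr fun t _ => hqdef t
  -- Step B : p t = (q t)ᵀ *ᵥ x₀ on [0, r]
  have hCθ : ContinuousOn (fun s => (C s)ᵀ *ᵥ θ s) (Set.Icc 0 r) :=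
    hC.matrix_transpose'.matrix_mulVec' hθc
  have hCx : ContinuousOn (fun s => (C s)ᵀ *ᵥ x s) (Set.Icc 0 r) :=
    hC.matrix_transpose'.matrix_mulVec' hxc
  have hpq : ∀ t ∈ Set.Icc (0:ℝ) r, p t = (q t)ᵀ *ᵥ x₀ := by
    intro t ht
    have hsub : Set.Icc (0:ℝ) t ⊆ Set.Icc 0 r := Set.Icc_subset_Icc le_rfl ht.2
    have hftc : ∫ s in (0:ℝ)..t, (f s + (C s)ᵀ *ᵥ x s) = y t - y 0 := by
      refine intervalIntegral.integral_eq_sub_of_hasDeriv_right_of_le ht.1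
        (hyc.mono hsub) (fun s hs => ?_)
        (((hf.add hCx).mono hsub).intervalIntegrable_of_Icc ht.1)
      exact (hy s (hsub (Set.Ioo_subset_Icc_self hs))).mono_of_mem_nhdsWithin
        (Icc_mem_nhdsGT_of_mem ⟨hs.1.le, lt_of_lt_of_le hs.2 ht.2⟩)
    have hintf : IntervalIntegrable f volume 0 t :=
      ((hf.mono hsub)).intervalIntegrable_of_Icc ht.1
    have hintCx : IntervalIntegrable (fun s => (C s)ᵀ *ᵥ x s) volume 0 t :=
      ((hCx.mono hsub)).intervalIntegrable_of_Icc ht.1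
    have hintCθ : IntervalIntegrable (fun s => (C s)ᵀ *ᵥ θ s) volume 0 t :=
      ((hCθ.mono hsub)).intervalIntegrable_of_Icc ht.1
    have hsplit : ∫ s in (0:ℝ)..t, (f s + (C s)ᵀ *ᵥ x s)
        = (∫ s in (0:ℝ)..t, f s) + ∫ s in (0:ℝ)..t, (C s)ᵀ *ᵥ x s :=
      intervalIntegral.integral_add hintf hintCx
    have hp1 : p t = ∫ s in (0:ℝ)..t, ((C s)ᵀ *ᵥ x s - (C s)ᵀ *ᵥ θ s) := by
      rw [hpdef t, ← hftc, hsplit, intervalIntegral.integral_sub hintCx hintCθ]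
      abel
    have hcongr : ∫ s in (0:ℝ)..t, ((C s)ᵀ *ᵥ x s - (C s)ᵀ *ᵥ θ s)
        = ∫ s in (0:ℝ)..t, mulVecTransCLM (k := k) x₀ ((Φ s)ᵀ * C s) := by
      refine intervalIntegral.integral_congr fun s hs => ?_
      rw [Set.uIcc_of_le ht.1] at hs
      have hs' := hsub hs
      rw [huniq s hs']
      simp only [mulVecTransCLM_apply]
      rw [Matrix.mulVec_add, add_sub_cancel_right, Matrix.mulVec_mulVec,
        Matrix.transpose_mul, Matrix.transpose_transpose]
    rw [hp1, hcongr]; erw [ContinuousLinearMap.intervalIntegral_comp_comm _ (hΦCint t ht)]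
    rw [← hqdef t]; rfl
  -- final computation
  have hqqT : ContinuousOn (fun t => q t * (q t)ᵀ) (Set.Icc 0 r) :=
    hqc.matrix_mul' hqc.matrix_transpose'
  have hQint :=
    hqqT.intervalIntegrable_of_Icc (μ := volume) h0r
  have hfinal : (∫ t in (0:ℝ)..r, q t *ᵥ p t) = Q *ᵥ x₀ := by
    have h1 : (∫ t in (0:ℝ)..r, q t *ᵥ p t)
        = ∫ t in (0:ℝ)..r, mulVecCLM (n := n) x₀ (q t * (q t)ᵀ) := by
      refine intervalIntegral.integral_congr fun t ht => ?_
      rw [Set.uIcc_of_le h0r] at ht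
      rw [hpq t ht]
      simp [Matrix.mulVec_mulVec]
    rw [h1]; erw [ContinuousLinearMap.intervalIntegral_comp_comm _ hQint]; rw [← hQ]; rfl
  have hxr := huniq r hrmem
  have hinv : Q⁻¹ *ᵥ (Q *ᵥ x₀) = x₀ := by
    rw [Matrix.mulVec_mulVec, Q.nonsing_inv_mul
      (isUnit_iff_ne_zero.2 hQpd.det_pos.ne'), Matrix.one_mulVec]
  rw [hfinal, hinv, hxr]
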